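/- Let P be an ergodic stochastic matrix with stationary distribution w, Z = (I − P + P^{(∞)})^{-1} − P^{(∞)}, Δ = diag(w)(I − P), and Z_{ij} = Z_i^j / w^j. Then for every row vector u with ∑_i u^i = 0, we have u Z̃ Δ = u and Δ Z̃ u^T = u^T, where Z̃ is the matrix (Z_{ij}). -/

import Mathlib

/-- A positive stochastic matrix has only constant fixed vectors. -/
lemma pos_stoch_fixed_const {n : ℕ} (Q : Matrix (Fin n) (Fin n) ℝ)
    (hQ : ∀ i j, 0 < Q i j) (hQ1 : ∀ i, ∑ j, Q i j = 1)
    (x : Fin n → ℝ) (hx : Q.mulVec x = x) : ∀ i j, x i = x j := by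
  rcases Nat.eq_zero_or_pos n with hn | hn
  · subst hn; exact fun i => i.elim0
  have : Nonempty (Fin n) := ⟨⟨0, hn⟩⟩
  obtain ⟨i0, -, hi0⟩ := Finset.exists_max_image Finset.univ x Finset.univ_nonempty
  have key : ∀ j, x j = x i0 := by
    have hsum : ∑ j, Q i0 j * (x i0 - x j) = 0 := by
      have h1 : ∑ j, Q i0 j * x j = x i0 := congrFun hx i0
      simp only [mul_sub, Finset.sum_sub_distrib, ← Finset.sum_mul, hQ1, one_mul, h1, sub_self]
    have hnn : ∀ j ∈ Finset.univ, 0 ≤ Q i0 j * (x i0 - x j) := fun j _ =>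
      mul_nonneg (hQ i0 j).le (sub_nonneg.2 (hi0 j (Finset.mem_univ j)))
    intro j
    have h0 := (Finset.sum_eq_zero_iff_of_nonneg hnn).1 hsum j (Finset.mem_univ j)
    rcases mul_eq_zero.1 h0 with h | h
    · exact absurd h (hQ i0 j).ne'
    · linarith [sub_eq_zero.1 h]
  intro i j; rw [key i, key j]

/-- The lowered fundamental matrix `Z̃` is a generalized inverse of the
Laplacian `Δ` on mean-zero vectors: `u Z̃ Δ = u` and `Δ Z̃ uᵀ = uᵀ`. -/
theorem fundamental_matrix_generalized_inverse {n : ℕ}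
    (P : Matrix (Fin n) (Fin n) ℝ)
    (hP0 : ∀ i j, 0 ≤ P i j) (hP1 : ∀ i, ∑ j, P i j = 1)
    (herg : ∃ k : ℕ, ∀ i j, 0 < (P ^ k) i j)
    (w : Fin n → ℝ)
    (hw1 : ∑ i, w i = 1) (hwpos : ∀ i, 0 < w i)
    (hwP : ∀ j, ∑ i, w i * P i j = w j)
    (Pinf : Matrix (Fin n) (Fin n) ℝ) (hPinf : ∀ i j, Pinf i j = w j)
    (Z : Matrix (Fin n) (Fin n) ℝ) (hZ : Z = (1 - P + Pinf)⁻¹ - Pinf)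
    (Ztil : Matrix (Fin n) (Fin n) ℝ) (hZtil : ∀ i j, Ztil i j = Z i j / w j)
    (Δ : Matrix (Fin n) (Fin n) ℝ)
    (hΔ : ∀ i j, Δ i j = w i * ((if i = j then (1 : ℝ) else 0) - P i j)) :
    ∀ u : Fin n → ℝ, (∑ i, u i = 0) →
      Matrix.vecMul u (Ztil * Δ) = u ∧ Matrix.mulVec (Δ * Ztil) u = u := by
  set A : Matrix (Fin n) (Fin n) ℝ := 1 - P + Pinf with hA
  -- basic products
  have hPP : P * Pinf = Pinf := by
    ext i j
    simp only [Matrix.mul_apply, hPinf, ← Finset.sum_mul, hP1, one_mul]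
  have hPinfP : Pinf * P = Pinf := by
    ext i j
    simp only [Matrix.mul_apply, hPinf, hwP]
  have hPinf2 : Pinf * Pinf = Pinf := by
    ext i j
    simp only [Matrix.mul_apply, hPinf, ← Finset.sum_mul, hw1, one_mul]
  have hAPinf : A * Pinf = Pinf := by
    rw [hA, add_mul, sub_mul, one_mul, hPP, hPinf2]; abel
  have hPinfA : Pinf * A = Pinf := by
    rw [hA, mul_add, mul_sub, mul_one, hPinfP, hPinf2]; abel
  -- invertibility of A
  have hker : ∀ x : Fin n → ℝ, A.mulVec x = 0 → x = 0 := by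
    intro x hx
    have hwA : Matrix.vecMul w A = w := by
      have hwP' : Matrix.vecMul w P = w := by
        funext j; simpa [Matrix.vecMul, dotProduct] using hwP j
      have hwPinf : Matrix.vecMul w Pinf = w := by
        funext j
        simp only [Matrix.vecMul, dotProduct, hPinf, ← Finset.sum_mul, hw1, one_mul]
      rw [hA, Matrix.vecMul_add, Matrix.vecMul_sub, Matrix.vecMul_one, hwP', hwPinf]
      abel
    have hwx : dotProduct w x = 0 := by
      have := congrArg (dotProduct w) hx
      rwa [Matrix.dotProduct_mulVec, hwA, dotProduct_zero] at this
    have hPinfx : Pinf.mulVec x = 0 := by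
      funext i
      simpa [Matrix.mulVec, dotProduct, hPinf] using hwx
    have hPx : P.mulVec x = x := by
      have h1 : x - P.mulVec x + Pinf.mulVec x = 0 := by
        have := hx
        rwa [hA, Matrix.add_mulVec, Matrix.sub_mulVec, Matrix.one_mulVec] at this
      rw [hPinfx, add_zero, sub_eq_zero] at h1
      exact h1.symm
    obtain ⟨k, hk⟩ := herg
    have hPk1 : ∀ m : ℕ, ∀ i, ∑ j, (P ^ m) i j = 1 := by
      intro m
      induction m with
      | zero => intro i; simp [Matrix.one_apply]
      | succ m ih =>
        intro i
        rw [pow_succ]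
        simp only [Matrix.mul_apply]
        rw [Finset.sum_comm]
        simp only [← Finset.mul_sum, hP1, mul_one]
        exact ih i
    have hPkx : ∀ m : ℕ, (P ^ m).mulVec x = x := by
      intro m
      induction m with
      | zero => simp [Matrix.one_mulVec]
      | succ m ih =>
        rw [pow_succ, ← Matrix.mulVec_mulVec, hPx, ih]
    have hconst := pos_stoch_fixed_const (P ^ k) hk (hPk1 k) x (hPkx k)
    funext i
    have : dotProduct w x = x i := by
      simp only [dotProduct]
      calc ∑ j, w j * x j = ∑ j, w j * x i := by
            exact Finset.sum_congr rfl fun j _ => by rw [hconst j i]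
        _ = x i := by rw [← Finset.sum_mul, hw1, one_mul]
    rw [hwx] at this
    exact (this.symm : x i = 0)
  have hdet : IsUnit A.det := by
    rw [isUnit_iff_ne_zero]
    intro h
    obtain ⟨v, hv0, hv⟩ := Matrix.exists_mulVec_eq_zero_iff.2 h
    exact hv0 (hker v hv)
  have hinvA : A⁻¹ * A = 1 := Matrix.nonsing_inv_mul A hdet
  have hAinv : A * A⁻¹ = 1 := Matrix.mul_nonsing_inv A hdet
  have hiPinf : A⁻¹ * Pinf = Pinf := by
    calc A⁻¹ * Pinf = A⁻¹ * (A * Pinf) := by rw [hAPinf]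
      _ = (A⁻¹ * A) * Pinf := by rw [mul_assoc]
      _ = Pinf := by rw [hinvA, one_mul]
  have hPinfi : Pinf * A⁻¹ = Pinf := by
    calc Pinf * A⁻¹ = (Pinf * A) * A⁻¹ := by rw [hPinfA]
      _ = Pinf := by rw [mul_assoc, hAinv, mul_one]
  have hZA : Z = A⁻¹ - Pinf := hZ
  have h1mP : (1 : Matrix (Fin n) (Fin n) ℝ) - P = A - Pinf := by rw [hA]; abel
  have hZ1P : Z * (1 - P) = 1 - Pinf := by
    rw [hZA, h1mP, sub_mul, mul_sub, mul_sub, hinvA, hiPinf, hPinfA, hPinf2]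
    abel
  have h1PZ : (1 - P) * Z = 1 - Pinf := by
    rw [hZA, h1mP, sub_mul, mul_sub, mul_sub, hAinv, hAPinf, hPinfi, hPinf2]
    abel
  -- Ztil * Δ = 1 - Pinf
  have hZD : Ztil * Δ = 1 - Pinf := by
    rw [← hZ1P]
    ext i k
    rw [Matrix.mul_apply, Matrix.mul_apply]
    refine Finset.sum_congr rfl fun j _ => ?_
    have hwj := (hwpos j).ne'
    rw [hZtil, hΔ]
    simp only [Matrix.sub_apply, Matrix.one_apply]
    field_simp
  -- Δ * Ztil entries
  have hDZ : ∀ i k, (Δ * Ztil) i k = (if i = k then (1 : ℝ) else 0) - w i := by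
    intro i k
    have hwk := (hwpos k).ne'
    have hsum : ∑ j, ((1 : Matrix (Fin n) (Fin n) ℝ) - P) i j * Z j k
        = (if i = k then (1 : ℝ) else 0) - w k := by
      have := congrFun (congrFun h1PZ i) k
      rw [Matrix.mul_apply] at this
      simpa [Matrix.sub_apply, Matrix.one_apply, hPinf] using this
    rw [Matrix.mul_apply]
    have hterm : ∀ j, Δ i j * Ztil j k
        = (w i / w k) * (((1 : Matrix (Fin n) (Fin n) ℝ) - P) i j * Z j k) := by
      intro j
      rw [hΔ, hZtil]
      simp only [Matrix.sub_apply, Matrix.one_apply]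
      field_simp
    rw [Finset.sum_congr rfl fun j _ => hterm j, ← Finset.mul_sum, hsum]
    by_cases h : i = k
    · subst h; field_simp
    · simp only [if_neg h, zero_sub, mul_neg]
      field_simp
  intro u hu
  constructor
  · rw [hZD]
    funext j
    simp only [Matrix.vecMul, dotProduct, Matrix.sub_apply, Matrix.one_apply, hPinf,
      mul_sub, Finset.sum_sub_distrib, ← Finset.sum_mul, hu, zero_mul, sub_zero]
    simp [Finset.sum_ite_eq', mul_ite]
  · funext i
    rw [Matrix.mulVec, dotProduct]
    simp only [hDZ]
    simp only [sub_mul, Finset.sum_sub_distrib, ← Finset.mul_sum, hu, mul_zero, sub_zero]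
    simp [Finset.sum_ite_eq, ite_mul]
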